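/- The null sequences of length 5, each of whose entries is 1 or 2 with the exception of either at most two entries equal to 3 or a single entry equal to 4, are exactly the following thirteen sequences: (1,2,2,2,1), (3,1,2,3,1), (1,3,2,1,3), (2,3,1,2,3), (3,2,1,3,2), (2,2,2,1,4), (4,1,2,2,2), (2,2,1,4,1), (1,4,1,2,2), (2,1,4,1,2), (1,3,1,3,1), (2,1,3,2,1), and (1,2,3,1,2). -/

import Mathlib

/-- `l'` is a strict blowup of `l`: either an interior blowup
`(n₁,…,n_{s−1}, n_s+1, 1, n_{s+1}+1, n_{s+2},…,n_k)` for some `1 ≤ s ≤ k−1`,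
or the end blowup `(n₁,…,n_{k−1}, n_k+1, 1)`. -/
def IsStrictBlowup (l l' : List ℤ) : Prop :=
  (∃ (A B : List ℤ) (a b : ℤ), l = A ++ a :: b :: B ∧
      l' = A ++ (a + 1) :: 1 :: (b + 1) :: B) ∨
  (∃ (A : List ℤ) (a : ℤ), l = A ++ [a] ∧ l' = A ++ [a + 1, 1])

/-- A null sequence is a finite integer sequence obtained from the one-term
sequence `(0)` by finitely many strict blowups. -/
def IsNullSeq (l : List ℤ) : Prop :=
  Relation.ReflTransGen IsStrictBlowup [0] l

def blowups : List ℤ → List (List ℤ)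
  | [] => []
  | [a] => [[a + 1, 1]]
  | a :: b :: rest =>
      ((a + 1) :: 1 :: (b + 1) :: rest) :: (blowups (b :: rest)).map (a :: ·)

lemma mem_blowups : ∀ (l l' : List ℤ), l' ∈ blowups l ↔ IsStrictBlowup l l'
  | [], l' => by
    constructor
    · intro h; simp [blowups] at h
    · rintro (⟨A, B, a, b, h, _⟩ | ⟨A, a, h, _⟩) <;> simp at h
  | [a], l' => by
    constructor
    · intro h
      simp [blowups] at h
      exact Or.inr ⟨[], a, by simp, by simp [h]⟩
    · rintro (⟨A, B, x, y, h, _⟩ | ⟨A, x, h, hl'⟩)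
      · exfalso
        have := congrArg List.length h
        simp at this; omega
      · have hA : A = [] ∧ x = a := by
          cases A with
          | nil => simpa [eq_comm] using h
          | cons c t =>
            exfalso
            have := congrArg List.length h
            simp at this
        simp [blowups, hl', hA.1, hA.2]
  | a :: b :: rest, l' => by
    constructor
    · intro h
      simp only [blowups, List.mem_cons, List.mem_map] at h
      rcases h with h | ⟨m, hm, rfl⟩
      · exact Or.inl ⟨[], rest, a, b, by simp, by simp [h]⟩
      · rcases (mem_blowups (b :: rest) m).1 hm with
          ⟨A, B, x, y, h1, h2⟩ | ⟨A, x, h1, h2⟩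
        · exact Or.inl ⟨a :: A, B, x, y, by simp [h1], by simp [h2]⟩
        · exact Or.inr ⟨a :: A, x, by simp [h1], by simp [h2]⟩
    · rintro (⟨A, B, x, y, h1, h2⟩ | ⟨A, x, h1, h2⟩)
      · cases A with
        | nil =>
          simp at h1
          obtain ⟨rfl, rfl, rfl⟩ := h1
          simp [blowups, h2]
        | cons c A' =>
          simp at h1
          obtain ⟨rfl, h1⟩ := h1
          have : l' = a :: (A' ++ (x + 1) :: 1 :: (y + 1) :: B) := by simp [h2]
          rw [this]
          simp only [blowups, List.mem_cons, List.mem_map]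
          refine Or.inr ⟨_, ?_, rfl⟩
          exact (mem_blowups (b :: rest) _).2 (Or.inl ⟨A', B, x, y, h1, rfl⟩)
      · cases A with
        | nil => simp at h1
        | cons c A' =>
          simp at h1
          obtain ⟨rfl, h1⟩ := h1
          have : l' = a :: (A' ++ [x + 1, 1]) := by simp [h2]
          rw [this]
          simp only [blowups, List.mem_cons, List.mem_map]
          refine Or.inr ⟨_, ?_, rfl⟩
          exact (mem_blowups (b :: rest) _).2 (Or.inr ⟨A', x, h1, rfl⟩)

lemma length_blowup {l l' : List ℤ} (h : IsStrictBlowup l l') :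
    l'.length = l.length + 1 := by
  rcases h with ⟨A, B, a, b, h1, h2⟩ | ⟨A, a, h1, h2⟩ <;> subst h1 <;> subst h2 <;> simp <;> omega

def NS : ℕ → List (List ℤ)
  | 0 => [[0]]
  | n + 1 => (NS n).flatMap blowups

lemma nullseq_length {l : List ℤ} (h : IsNullSeq l) : 1 ≤ l.length := by
  induction h with
  | refl => simp
  | tail _ hstep ih => rw [length_blowup hstep]; omega

lemma nullseq_mem_NS {l : List ℤ} (h : IsNullSeq l) : l ∈ NS (l.length - 1) := by
  induction h with
  | refl => simp [NS]
  | @tail b c hab hbc ih =>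
    have hb : 1 ≤ b.length := nullseq_length hab
    have hc : c.length = b.length + 1 := length_blowup hbc
    have : c.length - 1 = (b.length - 1) + 1 := by omega
    rw [this]
    simp only [NS, List.mem_flatMap]
    exact ⟨b, ih, (mem_blowups b c).2 hbc⟩

lemma mem_NS_nullseq : ∀ n, ∀ l ∈ NS n, IsNullSeq l := by
  intro n
  induction n with
  | zero => intro l hl; simp [NS] at hl; subst hl; exact Relation.ReflTransGen.refl
  | succ n ih =>
    intro l hl
    simp only [NS, List.mem_flatMap] at hl
    obtain ⟨m, hm, hlm⟩ := hl
    exact Relation.ReflTransGen.tail (ih m hm) ((mem_blowups m l).1 hlm)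

theorem stmt15 (l : List ℤ) (hlen : l.length = 5) :
    (IsNullSeq l ∧
      (((∀ x ∈ l, x = 1 ∨ x = 2 ∨ x = 3) ∧ l.count 3 ≤ 2) ∨
        ((∀ x ∈ l, x = 1 ∨ x = 2 ∨ x = 4) ∧ l.count 4 ≤ 1))) ↔
      l ∈ ([[1, 2, 2, 2, 1], [3, 1, 2, 3, 1], [1, 3, 2, 1, 3], [2, 3, 1, 2, 3],
        [3, 2, 1, 3, 2], [2, 2, 2, 1, 4], [4, 1, 2, 2, 2], [2, 2, 1, 4, 1],
        [1, 4, 1, 2, 2], [2, 1, 4, 1, 2], [1, 3, 1, 3, 1], [2, 1, 3, 2, 1],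
        [1, 2, 3, 1, 2]] : List (List ℤ)) := by
  constructor
  · rintro ⟨hnull, hP⟩
    have h4 : l ∈ NS 4 := by
      have := nullseq_mem_NS hnull
      rw [hlen] at this
      exact this
    have key : ∀ m ∈ NS 4,
        ((((∀ x ∈ m, x = 1 ∨ x = 2 ∨ x = 3) ∧ m.count 3 ≤ 2) ∨
          ((∀ x ∈ m, x = 1 ∨ x = 2 ∨ x = 4) ∧ m.count 4 ≤ 1)) →
        m ∈ ([[1, 2, 2, 2, 1], [3, 1, 2, 3, 1], [1, 3, 2, 1, 3], [2, 3, 1, 2, 3],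
        [3, 2, 1, 3, 2], [2, 2, 2, 1, 4], [4, 1, 2, 2, 2], [2, 2, 1, 4, 1],
        [1, 4, 1, 2, 2], [2, 1, 4, 1, 2], [1, 3, 1, 3, 1], [2, 1, 3, 2, 1],
        [1, 2, 3, 1, 2]] : List (List ℤ))) := by decide
    exact key l h4 hP
  · intro h
    refine ⟨?_, ?_⟩
    · apply mem_NS_nullseq 4
      have key : ∀ m ∈ ([[1, 2, 2, 2, 1], [3, 1, 2, 3, 1], [1, 3, 2, 1, 3], [2, 3, 1, 2, 3],
        [3, 2, 1, 3, 2], [2, 2, 2, 1, 4], [4, 1, 2, 2, 2], [2, 2, 1, 4, 1],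
        [1, 4, 1, 2, 2], [2, 1, 4, 1, 2], [1, 3, 1, 3, 1], [2, 1, 3, 2, 1],
        [1, 2, 3, 1, 2]] : List (List ℤ)), m ∈ NS 4 := by decide
      exact key l h
    · have key : ∀ m ∈ ([[1, 2, 2, 2, 1], [3, 1, 2, 3, 1], [1, 3, 2, 1, 3], [2, 3, 1, 2, 3],
        [3, 2, 1, 3, 2], [2, 2, 2, 1, 4], [4, 1, 2, 2, 2], [2, 2, 1, 4, 1],
        [1, 4, 1, 2, 2], [2, 1, 4, 1, 2], [1, 3, 1, 3, 1], [2, 1, 3, 2, 1],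
        [1, 2, 3, 1, 2]] : List (List ℤ)),
        (((∀ x ∈ m, x = 1 ∨ x = 2 ∨ x = 3) ∧ m.count 3 ≤ 2) ∨
          ((∀ x ∈ m, x = 1 ∨ x = 2 ∨ x = 4) ∧ m.count 4 ≤ 1)) := by decide
      exact key l h
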